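/- Let C₁ and C₂ be plane algebraic curves in ℂ² defined by nonzero polynomials f, g ∈ ℂ[x,y] with no common factor, where deg f = d₁ and deg g = d₂. Then |Z(f) ∩ Z(g)| ≤ d₁·d₂, i.e., the curves intersect in at most d₁·d₂ points. -/

import Mathlib

open MvPolynomial AddMonoidAlgebra
set_option maxHeartbeats 1000000

noncomputable def D2 : (Fin 2 →₀ ℕ) →+ Lex (ℕ × ℕ) where
  toFun d := toLex (d 0 + d 1, d 0)
  map_zero' := rfl
  map_add' a b := by
    have : (toLex (a 0 + a 1, a 0) + toLex (b 0 + b 1, b 0)) =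
        toLex ((a 0 + a 1, a 0) + (b 0 + b 1, b 0)) := rfl
    rw [this]; apply congrArg toLex; simp [Prod.ext_iff]; omega

lemma D2_inj : Function.Injective D2 := by
  intro a b h
  simp only [D2, AddMonoidHom.coe_mk, ZeroHom.coe_mk] at h
  change toLex (a 0 + a 1, a 0) = toLex (b 0 + b 1, b 0) at h
  have h' := congrArg ofLex h
  simp [Prod.ext_iff] at h'
  ext i
  fin_cases i
  · exact h'.2
  · show a 1 = b 1; omega

lemma fin2_sum (s : Fin 2 →₀ ℕ) : (s.sum fun _ e => e) = s 0 + s 1 := by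
  rw [Finsupp.sum_fintype]
  · exact Fin.sum_univ_two _
  · intro; rfl

lemma tdeg_eq {p : MvPolynomial (Fin 2) ℂ} (hp : p ≠ 0) :
    p.totalDegree = (ofLex (supDegree (⇑D2) p)).1 := by
  apply le_antisymm
  · apply Finset.sup_le
    intro s hs
    have h1 : D2 s ≤ supDegree (⇑D2) p := Finset.le_sup (f := ⇑D2) hs
    have h2 : (ofLex (D2 s)).1 ≤ (ofLex (supDegree (⇑D2) p)).1 := by
      rcases Prod.Lex.le_iff.mp h1 with h | h
      · exact le_of_lt h
      · exact le_of_eq h.1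
    show (s.sum fun _ e => e) ≤ _; rw [fin2_sum s]; exact h2
  · obtain ⟨a, ha, he⟩ := exists_supDegree_mem_support (⇑D2) hp
    rw [he]
    have : (ofLex (D2 a)).1 = a.sum fun _ e => e := by rw [fin2_sum a]; rfl
    rw [this]
    exact le_totalDegree ha

lemma tdeg_mul {p q : MvPolynomial (Fin 2) ℂ} (hp : p ≠ 0) (hq : q ≠ 0) :
    (p * q).totalDegree = p.totalDegree + q.totalDegree := by
  have hadd : ∀ a b, D2 (a + b) = D2 a + D2 b := map_add D2
  have hlc : leadingCoeff (⇑D2) p * leadingCoeff (⇑D2) q ≠ 0 :=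
    mul_ne_zero ((leadingCoeff_ne_zero D2_inj).mpr hp) ((leadingCoeff_ne_zero D2_inj).mpr hq)
  have hmul := supDegree_mul (p := p) (q := q) D2_inj hadd hlc hp hq
  have hpq : p * q ≠ 0 := mul_ne_zero hp hq
  rw [tdeg_eq hpq, tdeg_eq hp, tdeg_eq hq, hmul]
  rfl

def Fdim (m : ℕ) : ℕ := ∑ k ∈ Finset.range (m+1), (k+1)

lemma card_pairs (m : ℕ) : Nat.card {p : ℕ × ℕ // p.1 + p.2 ≤ m} = Fdim m := by
  have hmem : ∀ p : ℕ × ℕ,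
      p.1 + p.2 ≤ m ↔ p ∈ ((Finset.range (m+1)).biUnion fun k => Finset.HasAntidiagonal.antidiagonal k) := by
    intro p
    simp only [Finset.mem_biUnion, Finset.mem_range, Finset.HasAntidiagonal.mem_antidiagonal]
    constructor
    · intro h; exact ⟨p.1 + p.2, by omega, rfl⟩
    · rintro ⟨k, hk, rfl⟩; omega
  rw [Nat.card_congr (Equiv.subtypeEquiv (Equiv.refl _) hmem), Nat.card_eq_finsetCard,
    Finset.card_biUnion]
  · simp [Fdim, Finset.Nat.card_antidiagonal]
  · intro i _ j _ hij
    simp only [Finset.disjoint_left, Finset.HasAntidiagonal.mem_antidiagonal]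
    intro a h1 h2; omega

noncomputable def e2 : (Fin 2 →₀ ℕ) ≃ ℕ × ℕ :=
  Finsupp.equivFunOnFinite.trans (piFinTwoEquiv fun _ => ℕ)

lemma finrank_V (m : ℕ) :
    Module.finrank ℂ (restrictTotalDegree (Fin 2) ℂ m) = Fdim m := by
  rw [restrictTotalDegree, Module.finrank_eq_nat_card_basis (basisRestrictSupport ℂ _)]
  rw [← card_pairs m]
  apply Nat.card_congr
  refine Equiv.subtypeEquiv e2 ?_
  intro d
  have : (d.sum fun _ e => e) = d 0 + d 1 := by
    rw [Finsupp.sum_fintype]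
    · exact Fin.sum_univ_two _
    · intro; rfl
  simp only [Set.mem_setOf_eq, this, e2, Equiv.trans_apply, piFinTwoEquiv]
  rfl

noncomputable def mulMap (f : MvPolynomial (Fin 2) ℂ) (m n : ℕ)
    (h : f.totalDegree + m ≤ n) :
    restrictTotalDegree (Fin 2) ℂ m →ₗ[ℂ] restrictTotalDegree (Fin 2) ℂ n :=
  LinearMap.codRestrict _ ((LinearMap.mulLeft ℂ f).comp (Submodule.subtype _))
    (fun a => by
      rw [mem_restrictTotalDegree]
      calc (f * (a : MvPolynomial (Fin 2) ℂ)).totalDegree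
          ≤ f.totalDegree + (a : MvPolynomial (Fin 2) ℂ).totalDegree := totalDegree_mul _ _
        _ ≤ f.totalDegree + m := by
            have := (mem_restrictTotalDegree _ _ _).mp a.2
            omega
        _ ≤ n := h)

@[simp] lemma mulMap_apply (f : MvPolynomial (Fin 2) ℂ) (m n : ℕ) (h : f.totalDegree + m ≤ n)
    (a : restrictTotalDegree (Fin 2) ℂ m) : (mulMap f m n h a : MvPolynomial (Fin 2) ℂ) = f * a :=
  rfl

noncomputable def evalMap (S : Finset (ℂ × ℂ)) (n : ℕ) :
    restrictTotalDegree (Fin 2) ℂ n →ₗ[ℂ] (S → ℂ) :=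
  LinearMap.pi fun s =>
    (MvPolynomial.aeval ![s.1.1, s.1.2]).toLinearMap.comp (Submodule.subtype _)

@[simp] lemma evalMap_apply (S : Finset (ℂ × ℂ)) (n : ℕ)
    (p : restrictTotalDegree (Fin 2) ℂ n) (s : S) :
    evalMap S n p s = MvPolynomial.eval ![s.1.1, s.1.2] (p : MvPolynomial (Fin 2) ℂ) := by
  simp only [evalMap, LinearMap.pi_apply, LinearMap.comp_apply, Submodule.subtype_apply,
    AlgHom.toLinearMap_apply]
  exact RingHom.congr_fun (coe_aeval_eq_eval _) _

noncomputable def lin (s₀ t : ℂ × ℂ) : MvPolynomial (Fin 2) ℂ :=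
  if t.1 = s₀.1 then (X 1 - C t.2) else (X 0 - C t.1)

lemma lin_deg (s₀ t : ℂ × ℂ) : (lin s₀ t).totalDegree ≤ 1 := by
  unfold lin
  split <;>
  · rw [sub_eq_add_neg, ← map_neg]
    exact (totalDegree_add _ _).trans (by simp [totalDegree_X, totalDegree_C])

lemma lin_eval_self (s₀ t : ℂ × ℂ) : MvPolynomial.eval ![t.1, t.2] (lin s₀ t) = 0 := by
  unfold lin; split <;> simp

lemma lin_eval_ne (s₀ t : ℂ × ℂ) (h : t ≠ s₀) :
    MvPolynomial.eval ![s₀.1, s₀.2] (lin s₀ t) ≠ 0 := by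
  unfold lin
  split_ifs with h1
  · simp only [map_sub, eval_X, eval_C]
    have : t.2 ≠ s₀.2 := fun h2 => h (Prod.ext h1 h2)
    simpa [sub_eq_zero] using fun h2 => this h2.symm
  · simp only [map_sub, eval_X, eval_C]
    simpa [sub_eq_zero] using fun h2 => h1 h2.symm

noncomputable def interp (S : Finset (ℂ × ℂ)) (s₀ : ℂ × ℂ) : MvPolynomial (Fin 2) ℂ :=
  ∏ t ∈ S.erase s₀, lin s₀ t

lemma interp_deg (S : Finset (ℂ × ℂ)) (s₀ : ℂ × ℂ) : (interp S s₀).totalDegree ≤ S.card := by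
  refine (totalDegree_finset_prod _ _).trans ?_
  calc ∑ t ∈ S.erase s₀, (lin s₀ t).totalDegree ≤ ∑ _t ∈ S.erase s₀, 1 :=
        Finset.sum_le_sum fun t _ => lin_deg s₀ t
    _ = (S.erase s₀).card := by simp
    _ ≤ S.card := Finset.card_le_card (Finset.erase_subset _ _)

lemma interp_eval_self (S : Finset (ℂ × ℂ)) (s₀ : ℂ × ℂ) (hs₀ : s₀ ∈ S) :
    MvPolynomial.eval ![s₀.1, s₀.2] (interp S s₀) ≠ 0 := by
  unfold interp
  rw [map_prod]
  apply Finset.prod_ne_zero_iff.mpr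
  intro t ht
  exact lin_eval_ne s₀ t (Finset.ne_of_mem_erase ht)

lemma interp_eval_other (S : Finset (ℂ × ℂ)) (s₀ t : ℂ × ℂ) (ht : t ∈ S) (hne : t ≠ s₀) :
    MvPolynomial.eval ![t.1, t.2] (interp S s₀) = 0 := by
  unfold interp
  rw [map_prod]
  apply Finset.prod_eq_zero (Finset.mem_erase.mpr ⟨hne, ht⟩)
  exact lin_eval_self s₀ t
lemma evalMap_surj (S : Finset (ℂ × ℂ)) (n : ℕ) (hn : S.card ≤ n) :
    LinearMap.range (evalMap S n) = ⊤ := by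
  rw [eq_top_iff, ← (Pi.basisFun ℂ S).span_eq]
  apply Submodule.span_le.mpr
  rintro _ ⟨s₀, rfl⟩
  rw [Pi.basisFun_apply]
  set z := MvPolynomial.eval ![s₀.1.1, s₀.1.2] (interp S s₀) with hz
  have hz0 : z ≠ 0 := interp_eval_self S s₀ s₀.2
  have hmem : z⁻¹ • interp S s₀ ∈ restrictTotalDegree (Fin 2) ℂ n := by
    rw [mem_restrictTotalDegree]
    exact (totalDegree_smul_le _ _).trans ((interp_deg S s₀).trans hn)
  refine ⟨⟨z⁻¹ • interp S s₀, hmem⟩, ?_⟩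
  funext t
  simp only [evalMap_apply]
  rw [smul_eq_C_mul, map_mul, eval_C]
  by_cases ht : t = s₀
  · subst ht
    rw [← hz, inv_mul_cancel₀ hz0]
    simp
  · rw [interp_eval_other S s₀ t t.2 (fun h => ht (Subtype.ext h)), mul_zero]
    simp [Pi.single_apply, ht]

lemma Fdim_succ (m : ℕ) : Fdim (m+1) = Fdim m + (m+2) := by
  simp [Fdim, Finset.sum_range_succ]

lemma Fdim_id (a b N : ℕ) : Fdim (a+b+N) + Fdim N = Fdim (b+N) + Fdim (a+N) + a*b := by
  induction a with
  | zero => simp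
  | succ a ih =>
    have h1 : a + 1 + b + N = (a + b + N) + 1 := by omega
    have h2 : a + 1 + N = (a + N) + 1 := by omega
    rw [h1, h2, Fdim_succ, Fdim_succ]
    have : (a+1)*b = a*b + b := by ring
    omega

lemma key (f g : MvPolynomial (Fin 2) ℂ) (d₁ d₂ : ℕ) (hf : f ≠ 0) (hg : g ≠ 0)
    (hdf : f.totalDegree = d₁) (hdg : g.totalDegree = d₂)
    (hcop : ∀ h : MvPolynomial (Fin 2) ℂ, h ∣ f → h ∣ g → IsUnit h)
    (S : Finset (ℂ × ℂ))
    (hS : ∀ p ∈ S, MvPolynomial.eval ![p.1, p.2] f = 0 ∧ MvPolynomial.eval ![p.1, p.2] g = 0) :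
    S.card ≤ d₁ * d₂ := by
  set N := S.card with hN
  set n := d₁ + d₂ + N with hn
  have h1 : f.totalDegree + (d₂ + N) ≤ n := by omega
  have h2 : g.totalDegree + (d₁ + N) ≤ n := by omega
  have hg1 : g.totalDegree + N ≤ d₂ + N := by omega
  have hf1 : f.totalDegree + N ≤ d₁ + N := by omega
  set φ : (restrictTotalDegree (Fin 2) ℂ (d₂+N) × restrictTotalDegree (Fin 2) ℂ (d₁+N))
      →ₗ[ℂ] restrictTotalDegree (Fin 2) ℂ n :=
    (mulMap f (d₂+N) n h1).comp (LinearMap.fst ℂ _ _)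
      + (mulMap g (d₁+N) n h2).comp (LinearMap.snd ℂ _ _) with hφ
  set ψ := LinearMap.prod (mulMap g N (d₂+N) hg1) (-(mulMap f N (d₁+N) hf1)) with hψ
  have hker : LinearMap.ker φ ≤ LinearMap.range ψ := by
    rintro ⟨a, b⟩ hab
    rw [LinearMap.mem_ker] at hab
    have hab' : f * (a : MvPolynomial (Fin 2) ℂ) + g * (b : MvPolynomial (Fin 2) ℂ) = 0 := by
      have := congrArg (fun x : restrictTotalDegree (Fin 2) ℂ n =>
        (x : MvPolynomial (Fin 2) ℂ)) hab
      simpa [hφ, mulMap] using this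
    have hrp : IsRelPrime g f := fun d hdg' hdf' => hcop d hdf' hdg'
    have hdvd : g ∣ (a : MvPolynomial (Fin 2) ℂ) * f :=
      ⟨-(b : MvPolynomial (Fin 2) ℂ), by linear_combination hab'⟩
    obtain ⟨c, hc⟩ := hrp.dvd_of_dvd_mul_right hdvd
    have hb : (b : MvPolynomial (Fin 2) ℂ) = -(f * c) := by
      have hz : g * ((b : MvPolynomial (Fin 2) ℂ) + f * c) = 0 := by
        linear_combination hab' - f * hc
      rcases mul_eq_zero.mp hz with h | h
      · exact absurd h hg
      · linear_combination h
    by_cases hc0 : c = 0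
    · have ha0 : (a : MvPolynomial (Fin 2) ℂ) = 0 := by rw [hc, hc0, mul_zero]
      have hb0 : (b : MvPolynomial (Fin 2) ℂ) = 0 := by rw [hb, hc0, mul_zero, neg_zero]
      have : (⟨a, b⟩ : restrictTotalDegree (Fin 2) ℂ (d₂+N) × restrictTotalDegree (Fin 2) ℂ (d₁+N))
          = 0 := by
        apply Prod.ext <;> apply Subtype.ext <;> simp [ha0, hb0]
      rw [this]
      exact zero_mem _
    · have hcd : c.totalDegree ≤ N := by
        have ha2 : (a : MvPolynomial (Fin 2) ℂ).totalDegree ≤ d₂ + N :=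
          (mem_restrictTotalDegree _ _ _).mp a.2
        have hmul := tdeg_mul hg hc0
        rw [hc] at ha2
        omega
      refine ⟨⟨c, (mem_restrictTotalDegree _ _ _).mpr hcd⟩, ?_⟩
      apply Prod.ext <;> apply Subtype.ext
      · show g * c = (a : MvPolynomial (Fin 2) ℂ)
        rw [hc]
      · show -(f * c) = (b : MvPolynomial (Fin 2) ℂ)
        rw [hb]
  have hre : LinearMap.range φ ≤ LinearMap.ker (evalMap S n) := by
    rintro _ ⟨⟨a, b⟩, rfl⟩
    rw [LinearMap.mem_ker]
    funext t
    have heval := hS t t.2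
    simp only [hφ, LinearMap.add_apply, LinearMap.comp_apply, LinearMap.fst_apply,
      LinearMap.snd_apply, Pi.zero_apply]
    rw [show (((mulMap f (d₂+N) n h1) a + (mulMap g (d₁+N) n h2) b :
        restrictTotalDegree (Fin 2) ℂ n) : restrictTotalDegree (Fin 2) ℂ n) =
        (mulMap f (d₂+N) n h1) a + (mulMap g (d₁+N) n h2) b from rfl]
    rw [evalMap_apply]
    push_cast [Submodule.coe_add, mulMap_apply]
    rw [map_add, map_mul, map_mul, heval.1, heval.2, zero_mul, zero_mul, add_zero]
  have e1 : Module.finrank ℂ ((restrictTotalDegree (Fin 2) ℂ (d₂+N)) ×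
      (restrictTotalDegree (Fin 2) ℂ (d₁+N))) = Fdim (d₂+N) + Fdim (d₁+N) := by
    rw [Module.finrank_prod, finrank_V, finrank_V]
  have e2 := LinearMap.finrank_range_add_finrank_ker φ
  have e3 : Module.finrank ℂ (LinearMap.ker φ) ≤ Fdim N :=
    (Submodule.finrank_mono hker).trans ((LinearMap.finrank_range_le ψ).trans_eq (finrank_V N))
  have e4 := LinearMap.finrank_range_add_finrank_ker (evalMap S n)
  have e5 : Module.finrank ℂ (LinearMap.range (evalMap S n)) = N := by
    rw [evalMap_surj S n (by omega), finrank_top, Module.finrank_pi, Fintype.card_coe]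
  have e6 : Module.finrank ℂ (restrictTotalDegree (Fin 2) ℂ n) = Fdim n := finrank_V n
  have e7 : Module.finrank ℂ (LinearMap.range φ) ≤
      Module.finrank ℂ (LinearMap.ker (evalMap S n)) := Submodule.finrank_mono hre
  have idn := Fdim_id d₁ d₂ N
  rw [e1] at e2
  rw [e5, e6] at e4
  rw [← hn] at idn
  omega

/-- Bézout's inequality for affine plane curves over ℂ. -/
theorem bezout_inequality (f g : MvPolynomial (Fin 2) ℂ) (d₁ d₂ : ℕ)
    (hf : f ≠ 0) (hg : g ≠ 0)
    (hdf : f.totalDegree = d₁) (hdg : g.totalDegree = d₂)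
    (hcop : ∀ h : MvPolynomial (Fin 2) ℂ, h ∣ f → h ∣ g → IsUnit h) :
    {p : ℂ × ℂ | MvPolynomial.eval ![p.1, p.2] f = 0 ∧
        MvPolynomial.eval ![p.1, p.2] g = 0}.Finite ∧
    {p : ℂ × ℂ | MvPolynomial.eval ![p.1, p.2] f = 0 ∧
        MvPolynomial.eval ![p.1, p.2] g = 0}.ncard ≤ d₁ * d₂ := by
  set Z := {p : ℂ × ℂ | MvPolynomial.eval ![p.1, p.2] f = 0 ∧
      MvPolynomial.eval ![p.1, p.2] g = 0} with hZ
  have hkey : ∀ S : Finset (ℂ × ℂ), (∀ p ∈ S, p ∈ Z) → S.card ≤ d₁ * d₂ := fun S hS =>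
    key f g d₁ d₂ hf hg hdf hdg hcop S (fun p hp => hS p hp)
  have hfin : Z.Finite := by
    by_contra hinf
    obtain ⟨T, hTZ, hTcard⟩ := Set.Infinite.exists_subset_card_eq hinf (d₁ * d₂ + 1)
    have := hkey T (fun p hp => hTZ hp)
    omega
  refine ⟨hfin, ?_⟩
  rw [Set.ncard_eq_toFinset_card Z hfin]
  exact hkey hfin.toFinset (fun p hp => by simpa using hp)
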